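/- (Holley-type criterion) Let {X_i : i ∈ V} be {0,1}-valued random variables with joint law μ on Ω = {0,1}^V, V finite. Suppose there is a total order < on V such that for every i ∈ V and all disjoint Y, Y' ⊆ {j ∈ V : j < i}, whenever P(⋀_{j∈Y}(X_j = 1) ∧ ⋀_{j∈Y'}(X_j = 0)) > 0, we have P(X_i = 1 | ⋀_{j∈Y}(X_j=1) ∧ ⋀_{j∈Y'}(X_j=0)) ≥ η. Then μ stochastically dominates the product Bernoulli measure π_η^V on Ω. -/

import Mathlib

open Finset

open Classical in
/-- Probability of the event `P` under the (finitely supported) measure `μ`. -/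
noncomputable def Pr {Ω : Type*} [Fintype Ω] (μ : Ω → ℝ) (P : Ω → Prop) : ℝ :=
  ∑ ω : Ω, if P ω then μ ω else 0

/-- The product Bernoulli measure `π_η` on `{0,1}^V`. -/
noncomputable def bernoulliProd {V : Type*} [Fintype V] (η : ℝ) (ω : V → Bool) : ℝ :=
  ∏ i : V, if ω i then η else 1 - η

section Aux
open Classical

set_option linter.unusedSectionVars false

variable {V : Type*} [Fintype V] [DecidableEq V]

lemma Pr_congr {Ω : Type*} [Fintype Ω] (μ : Ω → ℝ) {P Q : Ω → Prop}
    (h : ∀ ω, P ω ↔ Q ω) : Pr μ P = Pr μ Q :=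
  Finset.sum_congr rfl fun ω _ => if_congr (h ω) rfl rfl

lemma Pr_true {Ω : Type*} [Fintype Ω] (μ : Ω → ℝ) : Pr μ (fun _ => True) = ∑ ω, μ ω := by
  simp [Pr]

lemma Pr_nonneg {Ω : Type*} [Fintype Ω] {μ : Ω → ℝ} (h : ∀ ω, 0 ≤ μ ω) (P : Ω → Prop) :
    0 ≤ Pr μ P := by
  apply Finset.sum_nonneg
  intro ω _
  split_ifs <;> simp [h ω]

lemma Pr_div {Ω : Type*} [Fintype Ω] (μ : Ω → ℝ) (c : ℝ) (P : Ω → Prop) :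
    Pr (fun ω => μ ω / c) P = Pr μ P / c := by
  rw [Pr, Pr, Finset.sum_div]
  apply Finset.sum_congr rfl
  intro ω _
  split_ifs <;> simp

/-- Extend a configuration on `{j // j ≠ i0}` by value `b` at `i0`. -/
noncomputable def es (i0 : V) (b : Bool) (ω' : {j : V // j ≠ i0} → Bool) : V → Bool :=
  fun j => if h : j = i0 then b else ω' ⟨j, h⟩

lemma es_self (i0 : V) (b : Bool) (ω' : {j : V // j ≠ i0} → Bool) : es i0 b ω' i0 = b :=
  dif_pos rfl

lemma es_ne (i0 : V) (b : Bool) (ω' : {j : V // j ≠ i0} → Bool) (j : {j : V // j ≠ i0}) :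
    es i0 b ω' j.1 = ω' j := by
  rw [es, dif_neg j.2]

lemma es_restrict (i0 : V) (b : Bool) (ω' : {j : V // j ≠ i0} → Bool) :
    (fun j : {j : V // j ≠ i0} => es i0 b ω' j.1) = ω' :=
  funext fun j => es_ne i0 b ω' j

/-- Splitting a configuration at coordinate `i0`. -/
noncomputable def esEquiv (i0 : V) : (Bool × ({j : V // j ≠ i0} → Bool)) ≃ (V → Bool) where
  toFun q := es i0 q.1 q.2
  invFun ω := (ω i0, fun j => ω j.1)
  left_inv q := by
    obtain ⟨b, ω'⟩ := q
    simp [es_self, es_restrict]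
  right_inv ω := by
    funext j
    by_cases h : j = i0
    · subst h; exact es_self _ _ _
    · exact es_ne i0 (ω i0) _ ⟨j, h⟩

lemma sum_split (i0 : V) (g : (V → Bool) → ℝ) :
    ∑ ω, g ω = (∑ ω', g (es i0 true ω')) + ∑ ω', g (es i0 false ω') := by
  rw [← Equiv.sum_comp (esEquiv i0) g, Fintype.sum_prod_type]
  rw [Fintype.sum_bool]
  rfl

lemma Pr_split (i0 : V) (μ : (V → Bool) → ℝ) (b : Bool)
    (P : ({j : V // j ≠ i0} → Bool) → Prop) :
    Pr μ (fun ω => ω i0 = b ∧ P (fun j : {j : V // j ≠ i0} => ω j.1)) =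
      Pr (fun ω' => μ (es i0 b ω')) P := by
  simp only [Pr]
  rw [sum_split i0]
  simp only [es_self, es_ne]
  cases b <;> simp

lemma bern_split (i0 : V) (η : ℝ) (b : Bool) (ω' : {j : V // j ≠ i0} → Bool) :
    bernoulliProd η (es i0 b ω') = (if b then η else 1 - η) * bernoulliProd η ω' := by
  rw [bernoulliProd, Fintype.prod_eq_mul_prod_compl i0, es_self]
  congr 1
  rw [Finset.prod_subtype (p := fun j => j ≠ i0) ({i0}ᶜ : Finset V)
    (fun j => by simp) (fun j => if es i0 b ω' j = true then η else 1 - η)]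
  rw [bernoulliProd]
  exact Fintype.prod_congr _ _ fun j => by rw [es_ne]

universe u

open Classical in
lemma holley_aux : ∀ (n : ℕ) (V : Type u) [Fintype V] [LinearOrder V]
    (μ : (V → Bool) → ℝ), Fintype.card V = n → (∀ ω, 0 ≤ μ ω) → ((∑ ω, μ ω) = 1) →
    ∀ η : ℝ, 0 ≤ η → η ≤ 1 →
    (∀ i : V, ∀ Y Y' : Finset V, Disjoint Y Y' →
      (∀ j ∈ Y, j < i) → (∀ j ∈ Y', j < i) →
      0 < Pr μ (fun ω => (∀ j ∈ Y, ω j = true) ∧ (∀ j ∈ Y', ω j = false)) →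
      η * Pr μ (fun ω => (∀ j ∈ Y, ω j = true) ∧ (∀ j ∈ Y', ω j = false)) ≤
        Pr μ (fun ω => ω i = true ∧ (∀ j ∈ Y, ω j = true) ∧ (∀ j ∈ Y', ω j = false))) →
    ∀ f : (V → Bool) → ℝ, Monotone f →
    ∑ ω, bernoulliProd η ω * f ω ≤ ∑ ω, μ ω * f ω := by
  intro n
  induction n with
  | zero =>
    intro V _ _ μ hcard hpos hsum η hη0 hη1 hyp f hf
    haveI : IsEmpty V := Fintype.card_eq_zero_iff.mp hcard
    haveI : Unique (V → Bool) :=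
      ⟨⟨fun i => isEmptyElim i⟩, fun ω => funext fun i => isEmptyElim i⟩
    rw [Fintype.sum_unique] at hsum ⊢
    rw [Fintype.sum_unique, hsum, bernoulliProd]
    rw [Finset.univ_eq_empty, Finset.prod_empty]
  | succ n IHn =>
    intro V _ _ μ hcard hpos hsum η hη0 hη1 hyp f hf
    rcases eq_or_lt_of_le hη0 with hη | hη
    · -- η = 0 : trivial, π₀ is the point mass at the all-false configuration
      set bot : V → Bool := fun _ => false with hbot
      have hL : ∑ ω, bernoulliProd η ω * f ω = f bot := by
        rw [Finset.sum_eq_single bot]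
        · have : bernoulliProd η bot = 1 := by
            simp [bernoulliProd, hbot, ← hη]
          rw [this, one_mul]
        · intro ω _ hne
          obtain ⟨i, hi⟩ := Function.ne_iff.mp hne
          have hit : ω i = true := by
            simpa [hbot] using hi
          have : bernoulliProd η ω = 0 := by
            rw [bernoulliProd]
            apply Finset.prod_eq_zero (Finset.mem_univ i)
            rw [hit, if_pos rfl, ← hη]
          rw [this, zero_mul]
        · intro h; exact absurd (Finset.mem_univ _) h
      rw [hL]
      calc f bot = ∑ ω, μ ω * f bot := by rw [← Finset.sum_mul, hsum, one_mul]
        _ ≤ ∑ ω, μ ω * f ω := by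
            apply Finset.sum_le_sum
            intro ω _
            exact mul_le_mul_of_nonneg_left (hf (fun i => Bool.false_le _)) (hpos ω)
    · -- η > 0
      haveI : Nonempty V := Fintype.card_pos_iff.mp (by rw [hcard]; exact n.succ_pos)
      set i0 : V := Finset.univ.min' Finset.univ_nonempty with hi0def
      have hmin : ∀ j : V, i0 ≤ j := fun j => Finset.min'_le _ j (Finset.mem_univ j)
      have hcard' : Fintype.card {j : V // j ≠ i0} = n := by
        have h1 := Fintype.card_subtype_compl (fun j : V => j = i0)
        simp only [Fintype.card_subtype_eq] at h1
        simp only [ne_eq]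
        omega
      set W := {j : V // j ≠ i0} with hW
      set ν : Bool → (W → Bool) → ℝ := fun b ω' => μ (es i0 b ω') with hν
      set pb : Bool → ℝ := fun b => ∑ ω', ν b ω' with hpb
      have hpadd : pb true + pb false = 1 := (sum_split i0 μ).symm.trans hsum
      have hpnn : ∀ b, 0 ≤ pb b := fun b => Finset.sum_nonneg fun ω' _ => hpos _
      -- η ≤ pb true
      have hηp : η ≤ pb true := by
        have hE1 : Pr μ (fun ω => (∀ j ∈ (∅ : Finset V), ω j = true) ∧
            (∀ j ∈ (∅ : Finset V), ω j = false)) = 1 := by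
          rw [Pr_congr μ (Q := fun _ => True) (fun ω => by simp), Pr_true, hsum]
        have h0 := hyp i0 ∅ ∅ (Finset.disjoint_empty_left _) (by simp) (by simp)
          (by rw [hE1]; exact one_pos)
        rw [hE1, mul_one] at h0
        calc η ≤ Pr μ (fun ω => ω i0 = true ∧ (∀ j ∈ (∅ : Finset V), ω j = true) ∧
              (∀ j ∈ (∅ : Finset V), ω j = false)) := h0
          _ = Pr (ν true) (fun _ => True) := by
              rw [← Pr_split i0 μ true (fun _ => True)]
              exact Pr_congr μ (fun ω => by simp)
          _ = pb true := Pr_true _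
      have hptpos : 0 < pb true := lt_of_lt_of_le hη hηp
      have hbnn : ∀ ω' : W → Bool, 0 ≤ bernoulliProd η ω' := by
        intro ω'
        apply Finset.prod_nonneg
        intro j _
        split_ifs
        · exact hη0
        · linarith
      set emb : W ↪ V := ⟨Subtype.val, Subtype.val_injective⟩ with hemb
      -- the conditional measures satisfy the Holley hypothesis
      have hcond : ∀ b : Bool, 0 < pb b →
          ∀ i : W, ∀ Y Y' : Finset W, Disjoint Y Y' →
          (∀ j ∈ Y, j < i) → (∀ j ∈ Y', j < i) →
          0 < Pr (fun ω' => ν b ω' / pb b)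
            (fun ω' => (∀ j ∈ Y, ω' j = true) ∧ (∀ j ∈ Y', ω' j = false)) →
          η * Pr (fun ω' => ν b ω' / pb b)
            (fun ω' => (∀ j ∈ Y, ω' j = true) ∧ (∀ j ∈ Y', ω' j = false)) ≤
            Pr (fun ω' => ν b ω' / pb b)
              (fun ω' => ω' i = true ∧ (∀ j ∈ Y, ω' j = true) ∧ (∀ j ∈ Y', ω' j = false)) := by
        intro b hb i Y Y' hd hY hY' hpos'
        rw [Pr_div] at hpos'
        rw [Pr_div, Pr_div, ← mul_div_assoc]
        rw [div_le_div_iff_of_pos_right hb]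
        have hE : 0 < Pr (ν b)
            (fun ω' => (∀ j ∈ Y, ω' j = true) ∧ (∀ j ∈ Y', ω' j = false)) := by
          have := mul_pos hpos' hb
          rwa [div_mul_cancel₀ _ (ne_of_gt hb)] at this
        have hii : i0 < i.1 := lt_of_le_of_ne (hmin i.1) (Ne.symm i.2)
        cases b
        · -- b = false : add i0 to the "false" set
          set YY : Finset V := Y.map emb with hYY
          set YY' : Finset V := insert i0 (Y'.map emb) with hYY'
          have hiff : ∀ ω : V → Bool,
              ((∀ j ∈ YY, ω j = true) ∧ (∀ j ∈ YY', ω j = false)) ↔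
              (ω i0 = false ∧ ((∀ j ∈ Y, ω j.1 = true) ∧ (∀ j ∈ Y', ω j.1 = false))) := by
            intro ω
            constructor
            · rintro ⟨h1, h2⟩
              exact ⟨h2 i0 (Finset.mem_insert_self _ _),
                fun j hj => h1 j.1 (Finset.mem_map_of_mem _ hj),
                fun j hj => h2 j.1 (Finset.mem_insert_of_mem (Finset.mem_map_of_mem _ hj))⟩
            · rintro ⟨h0, h1, h2⟩
              refine ⟨fun j hj => ?_, fun j hj => ?_⟩
              · rcases Finset.mem_map.mp hj with ⟨k, hk, rfl⟩
                exact h1 k hk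
              · rcases Finset.mem_insert.mp hj with rfl | hj
                · exact h0
                · rcases Finset.mem_map.mp hj with ⟨k, hk, rfl⟩
                  exact h2 k hk
          have h1 : Pr (ν false)
              (fun ω' => (∀ j ∈ Y, ω' j = true) ∧ (∀ j ∈ Y', ω' j = false)) =
              Pr μ (fun ω => (∀ j ∈ YY, ω j = true) ∧ (∀ j ∈ YY', ω j = false)) := by
            rw [← Pr_split i0 μ false
              (fun ω' => (∀ j ∈ Y, ω' j = true) ∧ (∀ j ∈ Y', ω' j = false))]
            exact (Pr_congr μ fun ω => hiff ω).symm
          have h2 : Pr (ν false)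
              (fun ω' => ω' i = true ∧ (∀ j ∈ Y, ω' j = true) ∧ (∀ j ∈ Y', ω' j = false)) =
              Pr μ (fun ω => ω i.1 = true ∧
                (∀ j ∈ YY, ω j = true) ∧ (∀ j ∈ YY', ω j = false)) := by
            rw [← Pr_split i0 μ false
              (fun ω' => ω' i = true ∧ (∀ j ∈ Y, ω' j = true) ∧ (∀ j ∈ Y', ω' j = false))]
            apply Pr_congr
            intro ω
            have := hiff ω
            tauto
          have hdisj : Disjoint YY YY' := by
            rw [hYY, hYY', Finset.disjoint_insert_right]
            constructor
            · intro hmem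
              rcases Finset.mem_map.mp hmem with ⟨k, _, hk⟩
              exact k.2 hk
            · exact (Finset.disjoint_map emb).mpr hd
          have hbY : ∀ j ∈ YY, j < i.1 := by
            intro j hj
            rcases Finset.mem_map.mp hj with ⟨k, hk, rfl⟩
            exact Subtype.coe_lt_coe.mpr (hY k hk)
          have hbY' : ∀ j ∈ YY', j < i.1 := by
            intro j hj
            rcases Finset.mem_insert.mp hj with rfl | hj
            · exact hii
            · rcases Finset.mem_map.mp hj with ⟨k, hk, rfl⟩
              exact Subtype.coe_lt_coe.mpr (hY' k hk)
          rw [h1, h2]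
          exact hyp i.1 YY YY' hdisj hbY hbY' (h1 ▸ hE)
        · -- b = true : add i0 to the "true" set
          set YY : Finset V := insert i0 (Y.map emb) with hYY
          set YY' : Finset V := Y'.map emb with hYY'
          have hiff : ∀ ω : V → Bool,
              ((∀ j ∈ YY, ω j = true) ∧ (∀ j ∈ YY', ω j = false)) ↔
              (ω i0 = true ∧ ((∀ j ∈ Y, ω j.1 = true) ∧ (∀ j ∈ Y', ω j.1 = false))) := by
            intro ω
            constructor
            · rintro ⟨h1, h2⟩
              exact ⟨h1 i0 (Finset.mem_insert_self _ _),
                fun j hj => h1 j.1 (Finset.mem_insert_of_mem (Finset.mem_map_of_mem _ hj)),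
                fun j hj => h2 j.1 (Finset.mem_map_of_mem _ hj)⟩
            · rintro ⟨h0, h1, h2⟩
              refine ⟨fun j hj => ?_, fun j hj => ?_⟩
              · rcases Finset.mem_insert.mp hj with rfl | hj
                · exact h0
                · rcases Finset.mem_map.mp hj with ⟨k, hk, rfl⟩
                  exact h1 k hk
              · rcases Finset.mem_map.mp hj with ⟨k, hk, rfl⟩
                exact h2 k hk
          have h1 : Pr (ν true)
              (fun ω' => (∀ j ∈ Y, ω' j = true) ∧ (∀ j ∈ Y', ω' j = false)) =
              Pr μ (fun ω => (∀ j ∈ YY, ω j = true) ∧ (∀ j ∈ YY', ω j = false)) := by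
            rw [← Pr_split i0 μ true
              (fun ω' => (∀ j ∈ Y, ω' j = true) ∧ (∀ j ∈ Y', ω' j = false))]
            exact (Pr_congr μ fun ω => hiff ω).symm
          have h2 : Pr (ν true)
              (fun ω' => ω' i = true ∧ (∀ j ∈ Y, ω' j = true) ∧ (∀ j ∈ Y', ω' j = false)) =
              Pr μ (fun ω => ω i.1 = true ∧
                (∀ j ∈ YY, ω j = true) ∧ (∀ j ∈ YY', ω j = false)) := by
            rw [← Pr_split i0 μ true
              (fun ω' => ω' i = true ∧ (∀ j ∈ Y, ω' j = true) ∧ (∀ j ∈ Y', ω' j = false))]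
            apply Pr_congr
            intro ω
            have := hiff ω
            tauto
          have hdisj : Disjoint YY YY' := by
            rw [hYY, hYY', Finset.disjoint_insert_left]
            constructor
            · intro hmem
              rcases Finset.mem_map.mp hmem with ⟨k, _, hk⟩
              exact k.2 hk
            · exact (Finset.disjoint_map emb).mpr hd
          have hbY : ∀ j ∈ YY, j < i.1 := by
            intro j hj
            rcases Finset.mem_insert.mp hj with rfl | hj
            · exact hii
            · rcases Finset.mem_map.mp hj with ⟨k, hk, rfl⟩
              exact Subtype.coe_lt_coe.mpr (hY k hk)
          have hbY' : ∀ j ∈ YY', j < i.1 := by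
            intro j hj
            rcases Finset.mem_map.mp hj with ⟨k, hk, rfl⟩
            exact Subtype.coe_lt_coe.mpr (hY' k hk)
          rw [h1, h2]
          exact hyp i.1 YY YY' hdisj hbY hbY' (h1 ▸ hE)
      -- apply the induction hypothesis to the conditional measures
      have hmul : ∀ b : Bool, 0 < pb b →
          pb b * ∑ ω', bernoulliProd η ω' * f (es i0 b ω') ≤
            ∑ ω', ν b ω' * f (es i0 b ω') := by
        intro b hb
        have hmono : Monotone (fun ω' : W → Bool => f (es i0 b ω')) := by
          intro x y hxy
          apply hf
          intro j
          by_cases h : j = i0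
          · simp [es, h]
          · simpa [es, h] using hxy ⟨j, h⟩
        have hIH := IHn W (fun ω' => ν b ω' / pb b) hcard'
          (fun ω' => div_nonneg (hpos _) (hpnn b))
          (by rw [← Finset.sum_div]
              exact div_self (ne_of_gt hb))
          η hη0 hη1 (hcond b hb) (fun ω' => f (es i0 b ω')) hmono
        have h2 := mul_le_mul_of_nonneg_left hIH (le_of_lt hb)
        calc pb b * ∑ ω', bernoulliProd η ω' * f (es i0 b ω')
            ≤ pb b * ∑ ω', (ν b ω' / pb b) * f (es i0 b ω') := h2
          _ = ∑ ω', ν b ω' * f (es i0 b ω') := by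
              rw [Finset.mul_sum]
              apply Finset.sum_congr rfl
              intro ω' _
              show pb b * (ν b ω' / pb b * f (es i0 b ω')) = ν b ω' * f (es i0 b ω')
              field_simp
      have hfalse : pb false * ∑ ω', bernoulliProd η ω' * f (es i0 false ω') ≤
          ∑ ω', ν false ω' * f (es i0 false ω') := by
        rcases lt_or_eq_of_le (hpnn false) with hb | hb
        · exact hmul false hb
        · rw [← hb, zero_mul]
          have hz := (Finset.sum_eq_zero_iff_of_nonneg
            (fun ω' (_ : ω' ∈ Finset.univ) => hpos (es i0 false ω'))).mp hb.symm
          apply le_of_eq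
          symm
          apply Finset.sum_eq_zero
          intro ω' _
          rw [show ν false ω' = 0 from hz ω' (Finset.mem_univ _), zero_mul]
      have hBA : (∑ ω', bernoulliProd η ω' * f (es i0 false ω')) ≤
          ∑ ω', bernoulliProd η ω' * f (es i0 true ω') := by
        apply Finset.sum_le_sum
        intro ω' _
        apply mul_le_mul_of_nonneg_left _ (hbnn ω')
        apply hf
        intro j
        by_cases h : j = i0
        · simp [es, h]
        · simp [es, h]
      have hLHS : ∑ ω, bernoulliProd η ω * f ω =
          η * (∑ ω', bernoulliProd η ω' * f (es i0 true ω')) +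
          (1 - η) * (∑ ω', bernoulliProd η ω' * f (es i0 false ω')) := by
        rw [sum_split i0 (fun ω => bernoulliProd η ω * f ω)]
        simp only [bern_split]
        rw [Finset.mul_sum, Finset.mul_sum]
        congr 1
        · apply Finset.sum_congr rfl
          intro ω' _
          simp only [if_true]
          ring
        · apply Finset.sum_congr rfl
          intro ω' _
          simp only [Bool.false_eq_true, if_false]
          ring
      have hRHS : ∑ ω, μ ω * f ω =
          (∑ ω', ν true ω' * f (es i0 true ω')) +
          ∑ ω', ν false ω' * f (es i0 false ω') :=
        sum_split i0 (fun ω => μ ω * f ω)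
      rw [hLHS, hRHS]
      have h1 := hmul true hptpos
      have hprod := mul_nonneg (sub_nonneg.mpr hηp) (sub_nonneg.mpr hBA)
      set A := ∑ ω', bernoulliProd η ω' * f (es i0 true ω') with hA
      set B := ∑ ω', bernoulliProd η ω' * f (es i0 false ω') with hB
      have hexp : (pb true - η) * (A - B) =
          pb true * A + (1 - pb true) * B - (η * A + (1 - η) * B) := by ring
      have hpf : pb false = 1 - pb true := by linarith
      rw [hpf] at hfalse
      linarith [h1, hfalse, hprod, hexp]
end Aux

/-- Holley-type criterion: if there is a total order on `V` such that for every
`i` and all disjoint `Y, Y' ⊆ {j : j < i}` with positive-probability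
conditioning event, `P(X_i = 1 | ⋀_{j∈Y}(X_j=1) ∧ ⋀_{j∈Y'}(X_j=0)) ≥ η`, then
`μ` stochastically dominates the product Bernoulli measure `π_η`. -/
theorem stochDom_of_holley {V : Type*} [Fintype V] [LinearOrder V]
    (μ : (V → Bool) → ℝ) (hpos : ∀ ω, 0 ≤ μ ω) (hsum : ∑ ω, μ ω = 1)
    (η : ℝ) (hη0 : 0 ≤ η) (hη1 : η ≤ 1)
    (hyp : ∀ i : V, ∀ Y Y' : Finset V, Disjoint Y Y' →
      (∀ j ∈ Y, j < i) → (∀ j ∈ Y', j < i) →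
      0 < Pr μ (fun ω => (∀ j ∈ Y, ω j = true) ∧ (∀ j ∈ Y', ω j = false)) →
      η * Pr μ (fun ω => (∀ j ∈ Y, ω j = true) ∧ (∀ j ∈ Y', ω j = false)) ≤
        Pr μ (fun ω => ω i = true ∧ (∀ j ∈ Y, ω j = true) ∧ (∀ j ∈ Y', ω j = false)))
    (f : (V → Bool) → ℝ) (hf : Monotone f) :
    ∑ ω, bernoulliProd η ω * f ω ≤ ∑ ω, μ ω * f ω := by
  exact holley_aux (Fintype.card V) V μ rfl hpos hsum η hη0 hη1 hyp f hf
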